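/- The sequence ln I3(n)/v3(n) converges as n → ∞ to a limit S3, and for every integer m ≥ 1 this limit satisfies (5/(7·6^m))·ln pc(m) + (15/(7·6^m))·ln 2 ≤ S3 ≤ (5/(7·6^m))·ln pd(m) + (15/(7·6^m))·ln 2. -/

import Mathlib

set_option maxRecDepth 4000 in
def pa3Next (pa pb pc pd : ℕ) : ℕ :=
  3*pa^6 + pb^6 + 16*pa^5*pb + 6*pa^5*pc + 2*pa^5*pd + 8*pb^5*pa + 35*pa^4*pb^2
      + 54*pa^4*pc^2 + 6*pa^4*pd^2 + 25*pb^4*pa^2 + 54*pb^4*pc^2 + 6*pb^4*pd^2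
      + 40*pa^3*pb^3 + 108*pa^3*pc^3 + 4*pa^3*pd^3 + 108*pb^3*pc^3 + 4*pb^3*pd^3
      + 24*pa^4*pb*pc + 8*pa^4*pb*pd + 36*pa^4*pc*pd + 6*pb^4*pa*pc + 2*pb^4*pa*pd
      + 36*pb^4*pc*pd + 36*pa^3*pb^2*pc + 12*pa^3*pb^2*pd + 216*pa^3*pc^2*pb
      + 108*pa^3*pc^2*pd + 24*pa^3*pd^2*pb + 36*pa^3*pd^2*pc + 24*pb^3*pa^2*pc
      + 8*pb^3*pa^2*pd + 216*pb^3*pc^2*pa + 108*pb^3*pc^2*pd + 24*pb^3*pd^2*pa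
      + 36*pb^3*pd^2*pc + 324*pc^3*pa^2*pb + 324*pc^3*pb^2*pa + 12*pd^3*pa^2*pb
      + 12*pd^3*pb^2*pa + 324*pa^2*pb^2*pc^2 + 36*pa^2*pb^2*pd^2
      + 144*pa^3*pb*pc*pd + 144*pb^3*pa*pc*pd + 216*pa^2*pb^2*pc*pd
      + 324*pa^2*pc^2*pb*pd + 108*pa^2*pd^2*pb*pc + 324*pb^2*pc^2*pa*pd
      + 108*pb^2*pd^2*pa*pc

set_option maxRecDepth 4000 in
def pb3Next (pa pb pc pd : ℕ) : ℕ :=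
  pa^6 + 3*pb^6 + 8*pa^5*pb + 16*pb^5*pa + 6*pb^5*pc + 2*pb^5*pd + 25*pa^4*pb^2
      + 54*pa^4*pc^2 + 6*pa^4*pd^2 + 35*pb^4*pa^2 + 54*pb^4*pc^2 + 6*pb^4*pd^2
      + 40*pa^3*pb^3 + 108*pa^3*pc^3 + 4*pa^3*pd^3 + 108*pb^3*pc^3 + 4*pb^3*pd^3
      + 6*pa^4*pb*pc + 2*pa^4*pb*pd + 36*pa^4*pc*pd + 24*pb^4*pa*pc + 8*pb^4*pa*pd
      + 36*pb^4*pc*pd + 24*pa^3*pb^2*pc + 8*pa^3*pb^2*pd + 216*pa^3*pc^2*pb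
      + 108*pa^3*pc^2*pd + 24*pa^3*pd^2*pb + 36*pa^3*pd^2*pc + 36*pb^3*pa^2*pc
      + 12*pb^3*pa^2*pd + 216*pb^3*pc^2*pa + 108*pb^3*pc^2*pd + 24*pb^3*pd^2*pa
      + 36*pb^3*pd^2*pc + 324*pc^3*pa^2*pb + 324*pc^3*pb^2*pa + 12*pd^3*pa^2*pb
      + 12*pd^3*pb^2*pa + 324*pa^2*pb^2*pc^2 + 36*pa^2*pb^2*pd^2
      + 144*pa^3*pb*pc*pd + 144*pb^3*pa*pc*pd + 216*pa^2*pb^2*pc*pd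
      + 324*pa^2*pc^2*pb*pd + 108*pa^2*pd^2*pb*pc + 324*pb^2*pc^2*pa*pd
      + 108*pb^2*pd^2*pa*pc

set_option maxRecDepth 4000 in
def pc3Next (pa pb pc pd : ℕ) : ℕ :=
  5832*pc^6 + 8*pd^6 + pa^5*pb + 3*pa^5*pc + pa^5*pd + pb^5*pa + 3*pb^5*pc
      + pb^5*pd + 11664*pc^5*pd + 144*pd^5*pc + 4*pa^4*pb^2 + 4*pb^4*pa^2
      + 9720*pc^4*pd^2 + 1080*pd^4*pc^2 + 6*pa^3*pb^3 + 162*pa^3*pc^3 + 6*pa^3*pd^3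
      + 162*pb^3*pc^3 + 6*pb^3*pd^3 + 4320*pc^3*pd^3 + 21*pa^4*pb*pc + 7*pa^4*pb*pd
      + 21*pb^4*pa*pc + 7*pb^4*pa*pd + 48*pa^3*pb^2*pc + 16*pa^3*pb^2*pd
      + 162*pa^3*pc^2*pd + 54*pa^3*pd^2*pc + 48*pb^3*pa^2*pc + 16*pb^3*pa^2*pd
      + 162*pb^3*pc^2*pd + 54*pb^3*pd^2*pc + 486*pc^3*pa^2*pb + 486*pc^3*pb^2*pa
      + 18*pd^3*pa^2*pb + 18*pd^3*pb^2*pa + 486*pa^2*pc^2*pb*pd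
      + 162*pa^2*pd^2*pb*pc + 486*pb^2*pc^2*pa*pd + 162*pb^2*pd^2*pa*pc

set_option maxRecDepth 4000 in
def pd3Next (pa pb pc pd : ℕ) : ℕ :=
  pa^6 + pb^6 + 5832*pc^6 + 8*pd^6 + 3*pa^5*pb + 9*pa^5*pc + 3*pa^5*pd
      + 3*pb^5*pa + 9*pb^5*pc + 3*pb^5*pd + 11664*pc^5*pd + 144*pd^5*pc
      + 3*pa^4*pb^2 + 3*pb^4*pa^2 + 9720*pc^4*pd^2 + 1080*pd^4*pc^2 + 2*pa^3*pb^3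
      + 162*pa^3*pc^3 + 6*pa^3*pd^3 + 162*pb^3*pc^3 + 6*pb^3*pd^3 + 4320*pc^3*pd^3
      + 27*pa^4*pb*pc + 9*pa^4*pb*pd + 27*pb^4*pa*pc + 9*pb^4*pa*pd
      + 36*pa^3*pb^2*pc + 12*pa^3*pb^2*pd + 162*pa^3*pc^2*pd + 54*pa^3*pd^2*pc
      + 36*pb^3*pa^2*pc + 12*pb^3*pa^2*pd + 162*pb^3*pc^2*pd + 54*pb^3*pd^2*pc
      + 486*pc^3*pa^2*pb + 486*pc^3*pb^2*pa + 18*pd^3*pa^2*pb + 18*pd^3*pb^2*pa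
      + 486*pa^2*pc^2*pb*pd + 162*pa^2*pd^2*pb*pc + 486*pb^2*pc^2*pa*pd
      + 162*pb^2*pd^2*pa*pc

/-- One step of the recursion for the ice-model boundary counts
`(pa, pb, pc, pd)` on the generalized Sierpinski gasket `SG_3(n)`. -/
def ice3Step (pa pb pc pd : ℕ) : ℕ × ℕ × ℕ × ℕ :=
  (pa3Next pa pb pc pd, pb3Next pa pb pc pd, pc3Next pa pb pc pd, pd3Next pa pb pc pd)

/-- The quadruple `(pa_3(n), pb_3(n), pc_3(n), pd_3(n))` on `SG_3(n)`. -/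
def ice3Seq : ℕ → ℕ × ℕ × ℕ × ℕ
  | 0 => (0, 1, 0, 1)
  | n + 1 =>
    ice3Step (ice3Seq n).1 (ice3Seq n).2.1 (ice3Seq n).2.2.1 (ice3Seq n).2.2.2

def pa3 (n : ℕ) : ℕ := (ice3Seq n).1
def pb3 (n : ℕ) : ℕ := (ice3Seq n).2.1
def pc3 (n : ℕ) : ℕ := (ice3Seq n).2.2.1
def pd3 (n : ℕ) : ℕ := (ice3Seq n).2.2.2

/-- The number of ice-model configurations on `SG_3(n)`. -/
def iceI3 (n : ℕ) : ℕ := 6 * pa3 n + 6 * pb3 n + 6 * pc3 n + 2 * pd3 n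

/-- The number of vertices of `SG_3(n)` (the division is exact). -/
def vSG3 (n : ℕ) : ℕ := (7 * 6 ^ n + 8) / 5


namespace Stmt18Aux

def cdP6 (c d : ℕ) : ℕ := 8*d^6+144*d^5*c+1080*d^4*c^2+4320*d^3*c^3+9720*d^2*c^4+11664*d*c^5+5832*c^6

set_option maxHeartbeats 1000000 in
lemma certA (a e f k : ℕ) :
    pd3Next a (a+e) (4*(a+e)+f) (4*(a+e)+f+k) ≤ cdP6 (4*(a+e)+f) (4*(a+e)+f+k) + 3280*(a+e)^3*(4*(a+e)+f+k)^3 :=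
  Nat.le.intro (k := 2896*e^3*f^3 + 9552*e^3*k*f^2 + 9768*e^3*k^2*f + 3274*e^3*k^3 + 34752*e^4*f^2 + 76416*e^4*k*f + 39072*e^4*k^2 + 138996*e^5*f + 152829*e^5*k + 185295*e^6 + 7536*a*e^2*f^3 + 27792*a*e^2*k*f^2 + 29088*a*e^2*k^2*f + 9804*a*e^2*k^3 + 125184*a*e^3*f^2 + 298752*a*e^3*k*f + 155424*a*e^3*k^2 + 639648*a*e^4*f + 750312*a*e^4*k + 1037895*a*e^5 + 5232*a^2*e*f^3 + 26064*a^2*e*k*f^2 + 28656*a^2*e*k^2*f + 9768*a^2*e*k^3 + 153216*a^2*e^2*f^2 + 430848*a^2*e^2*k*f + 230976*a^2*e^2*k^2 + 1113288*a^2*e^3*f + 1459122*a^2*e^3*k + 2336127*a^2*e^4 + 208*a^3*f^3 + 7536*a^3*k*f^2 + 9264*a^3*k^2*f + 3232*a^3*k^3 + 65280*a^3*e*f^2 + 268800*a^3*e*k*f + 151680*a^3*e*k^2 + 873456*a^3*e^2*f + 1399164*a^3*e^2*k + 2646688*a^3*e^3 + 2496*a^4*f^2 + 60288*a^4*k*f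 + 37056*a^4*k^2 + 270624*a^4*e*f + 658056*a^4*e*k + 1522680*a^4*e^2 + 9792*a^5*f + 120528*a^5*k + 372048*a^5*e + 12528*a^6)
    (by unfold pd3Next cdP6; ring)

set_option maxHeartbeats 1000000 in
lemma certB (c k : ℕ) :
    cdP6 c (c+k) + 147456*c^5*(c+k) ≤ 32768*(c+k)^6 + 147456*c^6 :=
  Nat.le.intro (k := 32760*k^6 + 196416*c*k^5 + 489600*c^2*k^4 + 645120*c^3*k^3 + 460800*c^4*k^2)
    (by unfold cdP6; ring)

set_option maxHeartbeats 1000000 in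
lemma certL1 (a b c k : ℕ) :
    32768*c^6 ≤ pc3Next a b c (c+k) :=
  Nat.le.intro (k := k*b^5 + 6*k^3*b^3 + 8*k^6 + 4*c*b^5 + 72*c*k^2*b^3 + 192*c*k^5 + 288*c^2*k*b^3 + 1920*c^2*k^4 + 384*c^3*b^3 + 10240*c^3*k^3 + 30720*c^4*k^2 + 49152*c^5*k + a*b^5 + 7*a*k*b^4 + 18*a*k^3*b^2 + 28*a*c*b^4 + 216*a*c*k^2*b^2 + 864*a*c^2*k*b^2 + 1152*a*c^3*b^2 + 4*a^2*b^4 + 16*a^2*k*b^3 + 18*a^2*k^3*b + 64*a^2*c*b^3 + 216*a^2*c*k^2*b + 864*a^2*c^2*k*b + 1152*a^2*c^3*b + 6*a^3*b^3 + 16*a^3*k*b^2 + 6*a^3*k^3 + 64*a^3*c*b^2 + 72*a^3*c*k^2 + 288*a^3*c^2*k + 384*a^3*c^3 + 4*a^4*b^2 + 7*a^4*k*b + 28*a^4*c*b + a^5*b + a^5*k + 4*a^5*c)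
    (by unfold pc3Next; ring)

set_option maxHeartbeats 1000000 in
lemma certC (a e c d : ℕ) :
    pc3Next a (a+e) c d + 6*c*e^2*(a+e)^3 ≤ pd3Next a (a+e) c d :=
  Nat.le.intro (k := 2*e^5*d + e^6 + 12*a*e^4*d + 18*a*e^4*c + 8*a*e^5 + 24*a^2*e^3*d + 54*a^2*e^3*c + 24*a^2*e^4 + 16*a^3*e^2*d + 42*a^3*e^2*c + 32*a^3*e^3 + 16*a^4*e^2)
    (by unfold pc3Next pd3Next; ring)

set_option maxHeartbeats 1000000 in
lemma certE (a e c d : ℕ) :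
    pa3Next a (a+e) c d + 6*c*e*(a+e)^4 ≤ pb3Next a (a+e) c d :=
  Nat.le.intro (k := 2*e^5*d + 2*e^6 + 16*a*e^4*d + 24*a*e^4*c + 20*a*e^5 + 48*a^2*e^3*d + 108*a^2*e^3*c + 80*a^2*e^4 + 64*a^3*e^2*d + 168*a^3*e^2*c + 160*a^3*e^3 + 32*a^4*e*d + 90*a^4*e*c + 160*a^4*e^2 + 64*a^5*e)
    (by unfold pa3Next pb3Next; ring)

set_option maxHeartbeats 1000000 in
lemma certF (a e f k : ℕ) :
    pb3Next a (a+e) (4*(a+e)+f) (4*(a+e)+f+k) ≤ 3840*(a+e)^3*(4*(a+e)+f+k)^3 :=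
  Nat.le.intro (k := 3584*e^3*f^3 + 11328*e^3*k*f^2 + 11472*e^3*k^2*f + 3836*e^3*k^3 + 42912*e^4*f^2 + 90576*e^4*k*f + 45882*e^4*k^2 + 171256*e^5*f + 181054*e^5*k + 227805*e^6 + 9984*a*e^2*f^3 + 33408*a*e^2*k*f^2 + 34272*a*e^2*k^2*f + 11496*a*e^2*k^3 + 162048*a*e^3*f^2 + 357504*a*e^3*k*f + 182928*a*e^3*k^2 + 816312*a*e^4*f + 895278*a*e^4*k + 1311390*a*e^5 + 8448*a^2*e*f^3 + 32256*a^2*e*k*f^2 + 33984*a^2*e*k^2*f + 11472*a^2*e*k^3 + 218880*a^2*e^2*f^2 + 524160*a^2*e^2*k*f + 272880*a^2*e^2*k^2 + 1511168*a^2*e^3*f + 1760192*a^2*e^3*k + 3081280*a^2*e^4 + 1792*a^3*f^3 + 9984*a^3*k*f^2 + 11136*a^3*k^2*f + 3808*a^3*k^3 + 119808*a^3*e*f^2 + 336384*a^3*e*k*f + 180288*a^3*e*k^2 + 1332800*a^3*e^2*f + 1715600*a^3*e^2*k + 3744624*a^3*e^3 + 19968*a^4*f^2 + 79104*a^4*k*f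 + 44448*a^4*k^2 + 540288*a^4*e*f + 826272*a^4*e*k + 2441424*a^4*e^2 + 73600*a^5*f + 156640*a^5*k + 783968*a^5*e + 89472*a^6)
    (by unfold pb3Next; ring)

set_option maxHeartbeats 1000000 in
lemma certG (a b c d : ℕ) :
    b^6 ≤ pa3Next a b c d :=
  Nat.le.intro (k := 4*b^3*d^3 + 6*b^4*d^2 + 36*c*b^3*d^2 + 36*c*b^4*d + 108*c^2*b^3*d + 54*c^2*b^4 + 108*c^3*b^3 + 12*a*b^2*d^3 + 24*a*b^3*d^2 + 2*a*b^4*d + 8*a*b^5 + 108*a*c*b^2*d^2 + 144*a*c*b^3*d + 6*a*c*b^4 + 324*a*c^2*b^2*d + 216*a*c^2*b^3 + 324*a*c^3*b^2 + 12*a^2*b*d^3 + 36*a^2*b^2*d^2 + 8*a^2*b^3*d + 25*a^2*b^4 + 108*a^2*c*b*d^2 + 216*a^2*c*b^2*d + 24*a^2*c*b^3 + 324*a^2*c^2*b*d + 324*a^2*c^2*b^2 + 324*a^2*c^3*b + 4*a^3*d^3 + 24*a^3*b*d^2 + 12*a^3*b^2*d + 40*a^3*b^3 + 36*a^3*c*d^2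 + 144*a^3*c*b*d + 36*a^3*c*b^2 + 108*a^3*c^2*d + 216*a^3*c^2*b + 108*a^3*c^3 + 6*a^4*d^2 + 8*a^4*b*d + 35*a^4*b^2 + 36*a^4*c*d + 24*a^4*c*b + 54*a^4*c^2 + 2*a^5*d + 16*a^5*b + 6*a^5*c + 3*a^6)
    (by unfold pa3Next; ring)

set_option maxHeartbeats 1000000 in
lemma certH (a e c d : ℕ) :
    pd3Next a (a+e) c d
      = pc3Next a (a+e) c d + e^2*(2*a+e)^3*(2*a+e+6*c+2*d) := by
  unfold pc3Next pd3Next; ring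

def Inv (a b c d : ℕ) : Prop :=
  1 ≤ a ∧ a < b ∧ 4*b ≤ c ∧ c ≤ d ∧ 100*d ≤ 101*c ∧
  3280*b^3*d^3 + 147456*c^6 ≤ 147456*c^5*d ∧
  b^6 ≤ 3*c^4*(b-a)^2

lemma pd_next_ub (a e f k : ℕ)
    (h6 : 3280*(a+e)^3*(4*(a+e)+f+k)^3 + 147456*(4*(a+e)+f)^6
        ≤ 147456*(4*(a+e)+f)^5*(4*(a+e)+f+k)) :
    pd3Next a (a+e) (4*(a+e)+f) (4*(a+e)+f+k) ≤ 32768*(4*(a+e)+f+k)^6 := by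
  have hA := certA a e f k
  have hB := certB (4*(a+e)+f) k
  have hshape : (4*(a+e)+f) + k = 4*(a+e)+f+k := rfl
  rw [hshape] at hB
  linarith

lemma pd_next_ub' {a b c d : ℕ} (hab : a ≤ b) (hbc : 4*b ≤ c) (hcd : c ≤ d)
    (h6 : 3280*b^3*d^3 + 147456*c^6 ≤ 147456*c^5*d) :
    pd3Next a b c d ≤ 32768*d^6 := by
  obtain ⟨e, rfl⟩ : ∃ e, b = a + e := ⟨b - a, by omega⟩
  obtain ⟨f, rfl⟩ : ∃ f, c = 4*(a+e)+f := ⟨c - 4*(a+e), by omega⟩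
  obtain ⟨k, rfl⟩ : ∃ k, d = 4*(a+e)+f+k := ⟨d - (4*(a+e)+f), by omega⟩
  exact pd_next_ub a e f k h6

lemma certL1' {a b c d : ℕ} (hcd : c ≤ d) : 32768*c^6 ≤ pc3Next a b c d := by
  obtain ⟨k, rfl⟩ : ∃ k, d = c + k := ⟨d - c, by omega⟩
  exact certL1 a b c k

lemma certF' {a b c d : ℕ} (hab : a ≤ b) (hbc : 4*b ≤ c) (hcd : c ≤ d) :
    pb3Next a b c d ≤ 3840*b^3*d^3 := by
  obtain ⟨e, rfl⟩ : ∃ e, b = a + e := ⟨b - a, by omega⟩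
  obtain ⟨f, rfl⟩ : ∃ f, c = 4*(a+e)+f := ⟨c - 4*(a+e), by omega⟩
  obtain ⟨k, rfl⟩ : ∃ k, d = 4*(a+e)+f+k := ⟨d - (4*(a+e)+f), by omega⟩
  exact certF a e f k

lemma certE' {a b : ℕ} (c d : ℕ) (hab : a ≤ b) :
    pa3Next a b c d + 6*c*(b-a)*b^4 ≤ pb3Next a b c d := by
  obtain ⟨e, rfl⟩ : ∃ e, b = a + e := ⟨b - a, by omega⟩
  simpa [Nat.add_sub_cancel_left] using certE a e c d

lemma certC' {a b : ℕ} (c d : ℕ) (hab : a ≤ b) :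
    pc3Next a b c d + 6*c*(b-a)^2*b^3 ≤ pd3Next a b c d := by
  obtain ⟨e, rfl⟩ : ∃ e, b = a + e := ⟨b - a, by omega⟩
  simpa [Nat.add_sub_cancel_left] using certC a e c d

lemma certH' {a b : ℕ} (c d : ℕ) (hab : a ≤ b) :
    pd3Next a b c d = pc3Next a b c d + (b-a)^2*(a+b)^3*(a+b+6*c+2*d) := by
  obtain ⟨e, rfl⟩ : ∃ e, b = a + e := ⟨b - a, by omega⟩
  rw [certH a e c d]
  simp [Nat.add_sub_cancel_left]
  ring

set_option maxHeartbeats 2000000 in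
lemma inv_step {a b c d : ℕ} (h : Inv a b c d) :
    Inv (pa3Next a b c d) (pb3Next a b c d) (pc3Next a b c d) (pd3Next a b c d) := by
  obtain ⟨h1, h2, h3, h4, h5, h6, h7⟩ := h
  have hb1 : 1 ≤ b := by omega
  have hc1 : 1 ≤ c := by omega
  have hd1 : 1 ≤ d := by omega
  have hE1 : 1 ≤ b - a := by omega
  have hApos : b^6 ≤ pa3Next a b c d := certG a b c d
  have hEgap : pa3Next a b c d + 6*c*(b-a)*b^4 ≤ pb3Next a b c d := certE' c d (by omega)
  have hBub : pb3Next a b c d ≤ 3840*b^3*d^3 := certF' (by omega) h3 h4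
  have hClb : 32768*c^6 ≤ pc3Next a b c d := certL1' h4
  have hDub : pd3Next a b c d ≤ 32768*d^6 := pd_next_ub' (by omega) h3 h4 h6
  have hCD : pc3Next a b c d + 6*c*(b-a)^2*b^3 ≤ pd3Next a b c d := certC' c d (by omega)
  have hDeq : pd3Next a b c d
      = pc3Next a b c d + (b-a)^2*(a+b)^3*(a+b+6*c+2*d) := certH' c d (by omega)
  refine ⟨?_, ?_, ?_, ?_, ?_, ?_, ?_⟩
  · -- 1 ≤ A
    have hb6 : 1 ≤ b^6 := Nat.one_le_pow _ _ (by omega)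
    exact le_trans hb6 hApos
  · -- A < B
    have hpos : 0 < 6*c*(b-a)*b^4 :=
      Nat.mul_pos (Nat.mul_pos (Nat.mul_pos (by norm_num) (by omega)) (by omega))
        (pow_pos (by omega) 4)
    linarith
  · -- 4*B ≤ C
    have t1 : (4*b)^3 ≤ c^3 := Nat.pow_le_pow_left h3 3
    have t2 : (100*d)^3 ≤ (101*c)^3 := Nat.pow_le_pow_left h5 3
    have t3 := Nat.mul_le_mul t1 t2
    have key : (64000000 : ℕ) * (4*(3840*b^3*d^3)) ≤ 64000000 * (32768*c^6) := by
      calc (64000000:ℕ) * (4*(3840*b^3*d^3)) = 15360*((4*b)^3*((100*d)^3)) := by ring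
        _ ≤ 15360*(c^3*((101*c)^3)) := Nat.mul_le_mul_left _ t3
        _ = 15825423360*c^6 := by ring
        _ ≤ 64000000 * (32768*c^6) := Nat.le.intro (k := 2081326576640*c^6) (by ring)
    have key2 : 4*(3840*b^3*d^3) ≤ 32768*c^6 :=
      Nat.le_of_mul_le_mul_left key (by norm_num)
    calc 4 * pb3Next a b c d ≤ 4*(3840*b^3*d^3) := by omega
      _ ≤ 32768*c^6 := key2
      _ ≤ pc3Next a b c d := hClb
  · -- C ≤ D
    exact le_trans (Nat.le_add_right _ _) hCD
  · -- 100*D ≤ 101*C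
    have g1 : 4*(b-a) ≤ c := by omega
    have g2 : 2*(a+b) ≤ c := by omega
    have g3 : 100*(a+b+6*c+2*d) ≤ 900*c := by omega
    have t1 : (4*(b-a))^2 ≤ c^2 := Nat.pow_le_pow_left g1 2
    have t2 : (2*(a+b))^3 ≤ c^3 := Nat.pow_le_pow_left g2 3
    have t3 := Nat.mul_le_mul (Nat.mul_le_mul t1 t2) g3
    have key : (128:ℕ) * (100*((b-a)^2*(a+b)^3*(a+b+6*c+2*d))) ≤ 128 * (32768*c^6) := by
      calc (128:ℕ) * (100*((b-a)^2*(a+b)^3*(a+b+6*c+2*d)))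
          = (4*(b-a))^2*(2*(a+b))^3*(100*(a+b+6*c+2*d)) := by ring
        _ ≤ c^2*c^3*(900*c) := t3
        _ = 900*c^6 := by ring
        _ ≤ 128 * (32768*c^6) := Nat.le.intro (k := 4193404*c^6) (by ring)
    have key2 : 100*((b-a)^2*(a+b)^3*(a+b+6*c+2*d)) ≤ 32768*c^6 :=
      Nat.le_of_mul_le_mul_left key (by norm_num)
    rw [hDeq]
    have := hClb
    linarith
  · -- I6'
    have s1 : (pb3Next a b c d)^3 ≤ (3840*b^3*d^3)^3 := Nat.pow_le_pow_left hBub 3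
    have s2 : (pd3Next a b c d)^3 ≤ (32768*d^6)^3 := Nat.pow_le_pow_left hDub 3
    have s3 : 3280*(pb3Next a b c d)^3*(pd3Next a b c d)^3
        ≤ 3280*((3840*b^3*d^3)^3*(32768*d^6)^3) := by
      calc 3280*(pb3Next a b c d)^3*(pd3Next a b c d)^3
          ≤ 3280*(3840*b^3*d^3)^3*(32768*d^6)^3 :=
            Nat.mul_le_mul (Nat.mul_le_mul_left _ s1) s2
        _ = 3280*((3840*b^3*d^3)^3*(32768*d^6)^3) := by ring
    have t1 : b^6*(100*d)^27 ≤ (3*c^4*(b-a)^2)*((101*c)^27) :=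
      Nat.mul_le_mul h7 (Nat.pow_le_pow_left h5 27)
    have key : (100^27 : ℕ) * (3280*((3840*b^3*d^3)^3*(32768*d^6)^3))
        ≤ (100^27) * (884736*((32768*c^6)^5*(c*(b-a)^2*b^3))) := by
      calc (100^27:ℕ) * (3280*((3840*b^3*d^3)^3*(32768*d^6)^3))
          = (3280*3840^3*32768^3*b^3)*(b^6*(100*d)^27) := by ring
        _ ≤ (3280*3840^3*32768^3*b^3)*((3*c^4*(b-a)^2)*((101*c)^27)) :=
            Nat.mul_le_mul_left _ t1
        _ = (3*101^27*(3280*3840^3*32768^3))*(c^31*(b-a)^2*b^3) := by ring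
        _ ≤ (100^27*(884736*32768^5))*(c^31*(b-a)^2*b^3) :=
            Nat.mul_le_mul_right _ (by norm_num)
        _ = (100^27) * (884736*((32768*c^6)^5*(c*(b-a)^2*b^3))) := by ring
    have key2 : 3280*((3840*b^3*d^3)^3*(32768*d^6)^3)
        ≤ 884736*((32768*c^6)^5*(c*(b-a)^2*b^3)) :=
      Nat.le_of_mul_le_mul_left key (by positivity)
    have s4 : (32768*c^6)^5 ≤ (pc3Next a b c d)^5 := Nat.pow_le_pow_left hClb 5
    have s5 : 884736*((32768*c^6)^5*(c*(b-a)^2*b^3))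
        ≤ 884736*((pc3Next a b c d)^5*(c*(b-a)^2*b^3)) :=
      Nat.mul_le_mul_left _ (Nat.mul_le_mul_right _ s4)
    have s6 : 147456*(pc3Next a b c d)^5*(pc3Next a b c d + 6*c*(b-a)^2*b^3)
        ≤ 147456*(pc3Next a b c d)^5*(pd3Next a b c d) :=
      Nat.mul_le_mul_left _ hCD
    have s7 : 147456*(pc3Next a b c d)^5*(pc3Next a b c d + 6*c*(b-a)^2*b^3)
        = 147456*(pc3Next a b c d)^6 + 884736*((pc3Next a b c d)^5*(c*(b-a)^2*b^3)) := by
      ring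
    linarith
  · -- I7'
    have hEgap' : 6*c*(b-a)*b^4 + pa3Next a b c d ≤ pb3Next a b c d := by
      rw [Nat.add_comm]; exact hEgap
    have hBA : 6*c*(b-a)*b^4 ≤ pb3Next a b c d - pa3Next a b c d :=
      Nat.le_sub_of_add_le hEgap'
    have hBA2 : (6*c*(b-a)*b^4)^2 ≤ (pb3Next a b c d - pa3Next a b c d)^2 :=
      Nat.pow_le_pow_left hBA 2
    have s1 : (pb3Next a b c d)^6 ≤ (3840*b^3*d^3)^6 := Nat.pow_le_pow_left hBub 6
    have t1 : b^6*((4*b)^4*(100*d)^18) ≤ (3*c^4*(b-a)^2)*(c^4*((101*c)^18)) :=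
      Nat.mul_le_mul h7 (Nat.mul_le_mul (Nat.pow_le_pow_left h3 4) (Nat.pow_le_pow_left h5 18))
    have key : (256*100^18 : ℕ) * ((3840*b^3*d^3)^6)
        ≤ (256*100^18) * (108*32768^4*(c^26*(b-a)^2*b^8)) := by
      calc (256*100^18 : ℕ) * ((3840*b^3*d^3)^6)
          = (3840^6*b^8)*(b^6*((4*b)^4*(100*d)^18)) := by ring
        _ ≤ (3840^6*b^8)*((3*c^4*(b-a)^2)*(c^4*((101*c)^18))) := Nat.mul_le_mul_left _ t1
        _ = (3*3840^6*101^18)*(c^26*(b-a)^2*b^8) := by ring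
        _ ≤ (256*100^18*(108*32768^4))*(c^26*(b-a)^2*b^8) :=
            Nat.mul_le_mul_right _ (by norm_num)
        _ = (256*100^18) * (108*32768^4*(c^26*(b-a)^2*b^8)) := by ring
    have key2 : (3840*b^3*d^3)^6 ≤ 108*32768^4*(c^26*(b-a)^2*b^8) :=
      Nat.le_of_mul_le_mul_left key (by positivity)
    have s2 : (108*32768^4 : ℕ)*(c^26*(b-a)^2*b^8)
        = 3*((32768*c^6)^4)*((6*c*(b-a)*b^4)^2) := by ring
    have s3 : 3*((32768*c^6)^4)*((6*c*(b-a)*b^4)^2)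
        ≤ 3*(pc3Next a b c d)^4*((pb3Next a b c d - pa3Next a b c d)^2) := by
      have u1 : (32768*c^6)^4 ≤ (pc3Next a b c d)^4 := Nat.pow_le_pow_left hClb 4
      exact Nat.mul_le_mul (Nat.mul_le_mul_left _ u1) hBA2
    calc (pb3Next a b c d)^6 ≤ (3840*b^3*d^3)^6 := s1
      _ ≤ 108*32768^4*(c^26*(b-a)^2*b^8) := key2
      _ = 3*((32768*c^6)^4)*((6*c*(b-a)*b^4)^2) := s2
      _ ≤ 3*(pc3Next a b c d)^4*((pb3Next a b c d - pa3Next a b c d)^2) := s3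

lemma pa3_succ (n : ℕ) : pa3 (n+1) = pa3Next (pa3 n) (pb3 n) (pc3 n) (pd3 n) := rfl
lemma pb3_succ (n : ℕ) : pb3 (n+1) = pb3Next (pa3 n) (pb3 n) (pc3 n) (pd3 n) := rfl
lemma pc3_succ (n : ℕ) : pc3 (n+1) = pc3Next (pa3 n) (pb3 n) (pc3 n) (pd3 n) := rfl
lemma pd3_succ (n : ℕ) : pd3 (n+1) = pd3Next (pa3 n) (pb3 n) (pc3 n) (pd3 n) := rfl

set_option maxRecDepth 10000 in
lemma seq1 : ice3Seq 1 = (11, 15, 15, 18) := by decide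

lemma pa1 : pa3 1 = 11 := by rw [pa3, seq1]
lemma pb1 : pb3 1 = 15 := by rw [pb3, seq1]
lemma pc1 : pc3 1 = 15 := by rw [pc3, seq1]
lemma pd1 : pd3 1 = 18 := by rw [pd3, seq1]

lemma pa2 : pa3 2 = 29665405536 := by
  rw [pa3_succ, pa1, pb1, pc1, pd1]; decide
lemma pb2 : pb3 2 = 29990772448 := by
  rw [pb3_succ, pa1, pb1, pc1, pd1]; decide
lemma pc2 : pc3 2 = 527746306872 := by
  rw [pc3_succ, pa1, pb1, pc1, pd1]; decide
lemma pd2 : pd3 2 = 527789051704 := by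
  rw [pd3_succ, pa1, pb1, pc1, pd1]; decide

lemma inv_base : Inv (pa3 2) (pb3 2) (pc3 2) (pd3 2) := by
  unfold Inv
  rw [pa2, pb2, pc2, pd2]
  norm_num

lemma invAll : ∀ n, Inv (pa3 (n+2)) (pb3 (n+2)) (pc3 (n+2)) (pd3 (n+2)) := by
  intro n
  induction n with
  | zero => exact inv_base
  | succ m ih =>
      have h := inv_step ih
      have e1 : pa3 (m+1+2) = pa3Next (pa3 (m+2)) (pb3 (m+2)) (pc3 (m+2)) (pd3 (m+2)) := rfl
      have e2 : pb3 (m+1+2) = pb3Next (pa3 (m+2)) (pb3 (m+2)) (pc3 (m+2)) (pd3 (m+2)) := rfl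
      have e3 : pc3 (m+1+2) = pc3Next (pa3 (m+2)) (pb3 (m+2)) (pc3 (m+2)) (pd3 (m+2)) := rfl
      have e4 : pd3 (m+1+2) = pd3Next (pa3 (m+2)) (pb3 (m+2)) (pc3 (m+2)) (pd3 (m+2)) := rfl
      rw [e1, e2, e3, e4]
      exact h

lemma pc_growth : ∀ n, 1 ≤ n → 32768*(pc3 n)^6 ≤ pc3 (n+1) := by
  intro n hn
  match n, hn with
  | 1, _ =>
      rw [pc1, pc2]; norm_num
  | (m+2), _ =>
      obtain ⟨-, -, -, h4, -, -, -⟩ := invAll m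
      rw [pc3_succ (m+2)]
      have hd : pd3 (m+2) = pc3 (m+2) + (pd3 (m+2) - pc3 (m+2)) := by omega
      rw [hd]
      exact certL1 _ _ _ _

lemma pd_decay : ∀ n, 1 ≤ n → pd3 (n+1) ≤ 32768*(pd3 n)^6 := by
  intro n hn
  match n, hn with
  | 1, _ =>
      rw [pd2, pd1]; norm_num
  | (m+2), _ =>
      obtain ⟨h1, h2, h3, h4, h5, h6, h7⟩ := invAll m
      rw [pd3_succ (m+2)]
      exact pd_next_ub' (le_of_lt h2) h3 h4 h6

lemma sandw : ∀ n, 1 ≤ n → 1 ≤ pc3 n ∧ pc3 n ≤ pd3 n ∧ pd3 n ≤ 2*pc3 n ∧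
    pa3 n ≤ pd3 n ∧ pb3 n ≤ pd3 n := by
  intro n hn
  match n, hn with
  | 1, _ => rw [pa1, pb1, pc1, pd1]; omega
  | (m+2), _ =>
      obtain ⟨h1, h2, h3, h4, h5, h6, h7⟩ := invAll m
      clear h6 h7
      omega

lemma pd_pos : ∀ n, 1 ≤ n → 1 ≤ pd3 n := by
  intro n hn
  have h := sandw n hn
  omega

lemma iceI3_bounds : ∀ n, 1 ≤ n → 2*pd3 n ≤ iceI3 n ∧ iceI3 n ≤ 20*pd3 n := by
  intro n hn
  obtain ⟨hc1, hcd, hd2, had, hbd⟩ := sandw n hn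
  unfold iceI3
  omega

open Filter Real Topology

open Filter Real Topology



noncomputable def vc (n : ℕ) : ℝ := (Real.log (pc3 n) + 3*Real.log 2)/6^n
noncomputable def vd (n : ℕ) : ℝ := (Real.log (pd3 n) + 3*Real.log 2)/6^n
noncomputable def wSeq (n : ℕ) : ℝ := vc (n+1)
noncomputable def uSeq (n : ℕ) : ℝ := vd (n+1)

lemma six_pow_pos (n : ℕ) : (0:ℝ) < 6^n := by positivity

lemma log_32768 : Real.log 32768 = 15 * Real.log 2 := by
  rw [show (32768:ℝ) = 2^15 by norm_num, Real.log_pow]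
  push_cast; ring

lemma vc_step (n : ℕ) (hn : 1 ≤ n) : vc n ≤ vc (n+1) := by
  have hg := pc_growth n hn
  have hc1 : 1 ≤ pc3 n := (sandw n hn).1
  have hpos : (0:ℝ) < (pc3 n : ℝ) := by exact_mod_cast hc1
  have hcast : (32768:ℝ) * (pc3 n:ℝ)^6 ≤ (pc3 (n+1):ℝ) := by exact_mod_cast hg
  have hlog : Real.log ((32768:ℝ) * (pc3 n:ℝ)^6) ≤ Real.log (pc3 (n+1)) :=
    Real.log_le_log (by positivity) hcast
  have hsplit : Real.log ((32768:ℝ) * (pc3 n:ℝ)^6)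
      = 15*Real.log 2 + 6*Real.log (pc3 n) := by
    rw [Real.log_mul (by norm_num) (by positivity), Real.log_pow, log_32768]
    push_cast; ring
  have hL : 15*Real.log 2 + 6*Real.log (pc3 n) ≤ Real.log (pc3 (n+1)) := by
    rw [← hsplit]; exact hlog
  unfold vc
  rw [div_le_div_iff₀ (six_pow_pos n) (six_pow_pos (n+1)), pow_succ]
  nlinarith [mul_le_mul_of_nonneg_right hL (le_of_lt (six_pow_pos n))]

lemma vd_step (n : ℕ) (hn : 1 ≤ n) : vd (n+1) ≤ vd n := by
  have hg := pd_decay n hn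
  have hd1 : 1 ≤ pd3 n := pd_pos n hn
  have hd1' : 1 ≤ pd3 (n+1) := pd_pos (n+1) (by omega)
  have hpos : (0:ℝ) < (pd3 n : ℝ) := by exact_mod_cast hd1
  have hpos' : (0:ℝ) < (pd3 (n+1) : ℝ) := by exact_mod_cast hd1'
  have hcast : (pd3 (n+1):ℝ) ≤ (32768:ℝ) * (pd3 n:ℝ)^6 := by exact_mod_cast hg
  have hlog : Real.log (pd3 (n+1)) ≤ Real.log ((32768:ℝ) * (pd3 n:ℝ)^6) :=
    Real.log_le_log hpos' hcast
  have hsplit : Real.log ((32768:ℝ) * (pd3 n:ℝ)^6)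
      = 15*Real.log 2 + 6*Real.log (pd3 n) := by
    rw [Real.log_mul (by norm_num) (by positivity), Real.log_pow, log_32768]
    push_cast; ring
  have hL : Real.log (pd3 (n+1)) ≤ 15*Real.log 2 + 6*Real.log (pd3 n) := by
    rw [hsplit] at hlog; exact hlog
  unfold vd
  rw [div_le_div_iff₀ (six_pow_pos (n+1)) (six_pow_pos n), pow_succ]
  nlinarith [mul_le_mul_of_nonneg_right hL (le_of_lt (six_pow_pos n))]

lemma vc_le_vd (n : ℕ) (hn : 1 ≤ n) : vc n ≤ vd n := by
  obtain ⟨hc1, hcd, -, -, -⟩ := sandw n hn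
  have h1 : (0:ℝ) < (pc3 n : ℝ) := by exact_mod_cast hc1
  have h2 : (pc3 n : ℝ) ≤ (pd3 n : ℝ) := by exact_mod_cast hcd
  have hlog := Real.log_le_log h1 h2
  unfold vc vd
  rw [div_le_div_iff₀ (six_pow_pos n) (six_pow_pos n)]
  nlinarith [mul_le_mul_of_nonneg_right hlog (le_of_lt (six_pow_pos n))]

lemma vd_le_vc_add (n : ℕ) (hn : 1 ≤ n) : vd n ≤ vc n + Real.log 2/6^n := by
  obtain ⟨hc1, -, hd2, -, -⟩ := sandw n hn
  have h1 : (0:ℝ) < (pc3 n : ℝ) := by exact_mod_cast hc1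
  have h2 : (pd3 n : ℝ) ≤ 2*(pc3 n : ℝ) := by exact_mod_cast hd2
  have hd1 : (0:ℝ) < (pd3 n : ℝ) := by
    have := pd_pos n hn; exact_mod_cast this
  have hlog : Real.log (pd3 n) ≤ Real.log 2 + Real.log (pc3 n) := by
    have := Real.log_le_log hd1 h2
    rwa [Real.log_mul (by norm_num) (ne_of_gt h1)] at this
  unfold vc vd
  rw [← add_div, div_le_div_iff₀ (six_pow_pos n) (six_pow_pos n)]
  nlinarith [six_pow_pos n]

lemma w_mono : Monotone wSeq :=
  monotone_nat_of_le_succ fun n => vc_step (n+1) (by omega)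

lemma u_anti : Antitone uSeq :=
  antitone_nat_of_succ_le fun n => vd_step (n+1) (by omega)

lemma cross (j k : ℕ) : wSeq j ≤ uSeq k := by
  rcases le_total j k with h | h
  · exact le_trans (w_mono h) (vc_le_vd (k+1) (by omega))
  · exact le_trans (vc_le_vd (j+1) (by omega)) (u_anti h)

lemma w_bdd : BddAbove (Set.range wSeq) := by
  refine ⟨uSeq 0, ?_⟩
  rintro x ⟨j, rfl⟩
  exact cross j 0

noncomputable def SL : ℝ := ⨆ n, wSeq n

lemma w_tendsto : Tendsto wSeq atTop (nhds SL) :=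
  tendsto_atTop_ciSup w_mono w_bdd

lemma delta_tendsto : Tendsto (fun n => uSeq n - wSeq n) atTop (nhds 0) := by
  have hup : Tendsto (fun n : ℕ => Real.log 2 * (1/6:ℝ)^(n+1)) atTop (nhds 0) := by
    have h1 : Tendsto (fun n : ℕ => (1/6:ℝ)^n) atTop (nhds 0) :=
      tendsto_pow_atTop_nhds_zero_of_lt_one (by norm_num) (by norm_num)
    have h2 : Tendsto (fun n : ℕ => (1/6:ℝ)^(n+1)) atTop (nhds 0) :=
      h1.comp (tendsto_add_atTop_nat 1)
    simpa using h2.const_mul (Real.log 2)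
  refine tendsto_of_tendsto_of_tendsto_of_le_of_le tendsto_const_nhds hup ?_ ?_
  · intro n
    exact sub_nonneg.2 (vc_le_vd (n+1) (by omega))
  · intro n
    have h := vd_le_vc_add (n+1) (by omega)
    have heq : Real.log 2/6^(n+1) = Real.log 2 * (1/6:ℝ)^(n+1) := by
      rw [div_pow, one_pow]; ring
    show uSeq n - wSeq n ≤ Real.log 2 * (1/6:ℝ)^(n+1)
    rw [← heq]
    unfold uSeq wSeq
    linarith

lemma u_tendsto : Tendsto uSeq atTop (nhds SL) := by
  have h := w_tendsto.add delta_tendsto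
  rw [add_zero] at h
  exact h.congr (fun n => by ring)

lemma vc_le_SL (m : ℕ) (hm : 1 ≤ m) : vc m ≤ SL := by
  obtain ⟨j, rfl⟩ : ∃ j, m = j + 1 := ⟨m - 1, by omega⟩
  exact le_ciSup w_bdd j

lemma SL_le_vd (m : ℕ) (hm : 1 ≤ m) : SL ≤ vd m := by
  apply ciSup_le
  intro j
  obtain ⟨i, rfl⟩ : ∃ i, m = i + 1 := ⟨m - 1, by omega⟩
  exact cross j i

-- arithmetic of vSG3
lemma v5 (n : ℕ) : 5 * vSG3 n = 7*6^n + 8 := by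
  have hdvd : ∀ n : ℕ, 5 ∣ 7*6^n+8 := by
    intro n
    induction n with
    | zero => decide
    | succ m ih =>
        have h : 7*6^(m+1)+8 = (7*6^m+8) + 5*(7*6^m) := by ring
        rw [h]
        exact dvd_add ih ⟨7*6^m, rfl⟩
  exact Nat.mul_div_cancel' (hdvd n)

lemma vSG3_real (n : ℕ) : (vSG3 n : ℝ) = (7*6^n + 8)/5 := by
  have h := v5 n
  have h2 : (5:ℝ) * (vSG3 n : ℝ) = 7*6^n + 8 := by exact_mod_cast h
  linarith

lemma den_pos (n : ℕ) : (0:ℝ) < 7*6^n + 8 := by positivity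

lemma T0 : Tendsto (fun n : ℕ => (5:ℝ)/(7*6^(n+1)+8)) atTop (nhds 0) := by
  have hden : Tendsto (fun n : ℕ => (7:ℝ)*6^(n+1)+8) atTop atTop := by
    have h1 : Tendsto (fun n : ℕ => (6:ℝ)^n) atTop atTop :=
      tendsto_pow_atTop_atTop_of_one_lt (by norm_num)
    have h2 : Tendsto (fun n : ℕ => (6:ℝ)^(n+1)) atTop atTop :=
      h1.comp (tendsto_add_atTop_nat 1)
    have h3 := h2.const_mul_atTop (show (0:ℝ) < 7 by norm_num)
    exact tendsto_atTop_add_const_right _ 8 h3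
  exact tendsto_const_nhds.div_atTop hden

lemma T3 : Tendsto (fun n : ℕ => (5:ℝ)*6^(n+1)/(7*6^(n+1)+8)) atTop (nhds (5/7)) := by
  have heq : ∀ n : ℕ, (5:ℝ)*6^(n+1)/(7*6^(n+1)+8) = 5/(7+8/6^(n+1)) := by
    intro n
    rw [div_eq_div_iff (ne_of_gt (den_pos (n+1))) (by positivity)]
    field_simp
  have hden : Tendsto (fun n : ℕ => (7:ℝ) + 8/6^(n+1)) atTop (nhds 7) := by
    have h1 : Tendsto (fun n : ℕ => (8:ℝ)/6^(n+1)) atTop (nhds 0) := by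
      have h2 : Tendsto (fun n : ℕ => (1/6:ℝ)^(n+1)) atTop (nhds 0) :=
        (tendsto_pow_atTop_nhds_zero_of_lt_one (by norm_num) (by norm_num)).comp
          (tendsto_add_atTop_nat 1)
      have h3 := h2.const_mul (8:ℝ)
      rw [mul_zero] at h3
      refine h3.congr (fun n => ?_)
      rw [div_pow, one_pow]
      ring
    have := (tendsto_const_nhds (x := (7:ℝ)) (f := atTop)).add h1
    rwa [add_zero] at this
  have hlim : Tendsto (fun n : ℕ => (5:ℝ)/(7+8/6^(n+1))) atTop (nhds (5/7)) :=
    tendsto_const_nhds.div hden (by norm_num)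
  exact hlim.congr (fun n => (heq n).symm)

lemma log_pd_eq (n : ℕ) : Real.log (pd3 (n+1)) = vd (n+1) * 6^(n+1) - 3*Real.log 2 := by
  unfold vd
  field_simp
  ring

lemma Tlog : Tendsto (fun n : ℕ => Real.log (pd3 (n+1)) * (5/(7*6^(n+1)+8)))
    atTop (nhds (SL*(5/7))) := by
  have h1 : Tendsto (fun n : ℕ => uSeq n * ((5:ℝ)*6^(n+1)/(7*6^(n+1)+8))
      - 3*Real.log 2 * (5/(7*6^(n+1)+8))) atTop (nhds (SL*(5/7) - 0)) := by
    apply Tendsto.sub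
    · exact u_tendsto.mul T3
    · have := T0.const_mul (3*Real.log 2)
      rw [mul_zero] at this
      simpa using this.congr (fun n => by ring)
  rw [sub_zero] at h1
  refine h1.congr (fun n => ?_)
  rw [log_pd_eq n]
  have hne : (7:ℝ)*6^(n+1)+8 ≠ 0 := ne_of_gt (den_pos (n+1))
  unfold uSeq vd
  field_simp

lemma Taux (κ : ℝ) : Tendsto (fun n : ℕ =>
    (Real.log κ + Real.log (pd3 (n+1))) * (5/(7*6^(n+1)+8)))
    atTop (nhds (SL*(5/7))) := by
  have h0 : Tendsto (fun n : ℕ => Real.log κ * (5/(7*6^(n+1)+8))) atTop (nhds 0) := by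
    have := T0.const_mul (Real.log κ)
    rwa [mul_zero] at this
  have h := h0.add Tlog
  rw [zero_add] at h
  exact h.congr (fun n => by ring)

lemma g_eq (n : ℕ) :
    Real.log (iceI3 (n+1)) / (vSG3 (n+1) : ℝ)
      = Real.log (iceI3 (n+1)) * (5/(7*6^(n+1)+8)) := by
  rw [vSG3_real, div_div_eq_mul_div]
  ring

lemma main_tendsto : Tendsto (fun n : ℕ => Real.log (iceI3 n) / (vSG3 n : ℝ))
    atTop (nhds (SL*(5/7))) := by
  rw [← tendsto_add_atTop_iff_nat 1]
  have hl : ∀ n : ℕ, (Real.log 2 + Real.log (pd3 (n+1))) * (5/(7*6^(n+1)+8))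
      ≤ Real.log (iceI3 (n+1)) / (vSG3 (n+1) : ℝ) := by
    intro n
    rw [g_eq]
    apply mul_le_mul_of_nonneg_right ?_ (by positivity)
    obtain ⟨hlb, hub⟩ := iceI3_bounds (n+1) (by omega)
    have hd1 : (0:ℝ) < (pd3 (n+1) : ℝ) := by
      have := pd_pos (n+1) (by omega); exact_mod_cast this
    have hle : (2:ℝ) * (pd3 (n+1):ℝ) ≤ (iceI3 (n+1) : ℝ) := by exact_mod_cast hlb
    have := Real.log_le_log (by positivity) hle
    rwa [Real.log_mul (by norm_num) (ne_of_gt hd1)] at this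
  have hu : ∀ n : ℕ, Real.log (iceI3 (n+1)) / (vSG3 (n+1) : ℝ)
      ≤ (Real.log 20 + Real.log (pd3 (n+1))) * (5/(7*6^(n+1)+8)) := by
    intro n
    rw [g_eq]
    apply mul_le_mul_of_nonneg_right ?_ (by positivity)
    obtain ⟨hlb, hub⟩ := iceI3_bounds (n+1) (by omega)
    have hd1 : (0:ℝ) < (pd3 (n+1) : ℝ) := by
      have := pd_pos (n+1) (by omega); exact_mod_cast this
    have hI1 : (0:ℝ) < (iceI3 (n+1) : ℝ) := by
      have h2 : (2:ℝ) * (pd3 (n+1):ℝ) ≤ (iceI3 (n+1) : ℝ) := by exact_mod_cast hlb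
      linarith
    have hle : (iceI3 (n+1) : ℝ) ≤ (20:ℝ) * (pd3 (n+1):ℝ) := by exact_mod_cast hub
    have := Real.log_le_log hI1 hle
    rwa [Real.log_mul (by norm_num) (ne_of_gt hd1)] at this
  exact tendsto_of_tendsto_of_tendsto_of_le_of_le (Taux 2) (Taux 20) hl hu

end Stmt18Aux

theorem stmt_18 :
    ∃ S3 : ℝ, Filter.Tendsto (fun n => Real.log (iceI3 n) / (vSG3 n : ℝ))
        Filter.atTop (nhds S3) ∧
      ∀ m : ℕ, 1 ≤ m →
        5 / (7 * (6 : ℝ) ^ m) * Real.log (pc3 m) +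
            15 / (7 * (6 : ℝ) ^ m) * Real.log 2 ≤ S3 ∧
        S3 ≤ 5 / (7 * (6 : ℝ) ^ m) * Real.log (pd3 m) +
            15 / (7 * (6 : ℝ) ^ m) * Real.log 2 := by
  classical
  refine ⟨Stmt18Aux.SL * (5/7), Stmt18Aux.main_tendsto, ?_⟩
  intro m hm
  constructor
  · have h1 : 5/(7*(6:ℝ)^m) * Real.log (pc3 m) + 15/(7*(6:ℝ)^m) * Real.log 2
        = Stmt18Aux.vc m * (5/7) := by
      unfold Stmt18Aux.vc
      field_simp
      ring
    rw [h1]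
    exact mul_le_mul_of_nonneg_right (Stmt18Aux.vc_le_SL m hm) (by norm_num)
  · have h1 : 5/(7*(6:ℝ)^m) * Real.log (pd3 m) + 15/(7*(6:ℝ)^m) * Real.log 2
        = Stmt18Aux.vd m * (5/7) := by
      unfold Stmt18Aux.vd
      field_simp
      ring
    rw [h1]
    exact mul_le_mul_of_nonneg_right (Stmt18Aux.SL_le_vd m hm) (by norm_num)
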